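/- arXiv:2106.15393 — 5 statements merged into one kernel-verified Lean document; each statement's English description precedes it below -/
import Mathlib

section
/- Let q ∈ (0,1], let G₁, G₂ ~ Geom(q) be i.i.d. random variables, and let k₁, k₂ be integers with k₁ < k₂. Then min(k₁, G₁) + min(k₂, G₂) ⪯ min(k₁ + 1, G₁) + min(k₂ − 1, G₂), i.e., for all z ∈ ℝ, P(min(k₁, G₁) + min(k₂, G₂) ≥ z) ≤ P(min(k₁ + 1, G₁) + min(k₂ − 1, G₂) ≥ z). -/
open MeasureTheory ProbabilityTheory

lemma geom_tail {Ω : Type*} [MeasurableSpace Ω] (μ : Measure Ω) [IsProbabilityMeasure μ]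
    (q : ℝ) (hq0 : 0 < q) (hq1 : q ≤ 1) (G : Ω → ℕ) (hG : Measurable G)
    (hGpos : ∀ ω, 1 ≤ G ω)
    (hdist : ∀ k : ℕ, 1 ≤ k →
      μ {ω | G ω = k} = ENNReal.ofReal ((1 - q) ^ (k - 1) * q)) :
    ∀ j : ℕ, 1 ≤ j → μ {ω | j ≤ G ω} = ENNReal.ofReal ((1 - q) ^ (j - 1)) := by
  have hp0 : 0 ≤ 1 - q := by linarith
  intro j hj
  induction j with
  | zero => omega
  | succ m ih =>
    rcases Nat.lt_or_ge 1 (m + 1) with h1 | h1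
    · have hm : 1 ≤ m := by omega
      have hsplit : {ω | m ≤ G ω} = {ω | G ω = m} ∪ {ω | m + 1 ≤ G ω} := by
        ext ω; simp only [Set.mem_setOf_eq, Set.mem_union]; omega
      have hdisj : Disjoint {ω | G ω = m} {ω | m + 1 ≤ G ω} := by
        rw [Set.disjoint_left]; intro ω h1 h2
        simp only [Set.mem_setOf_eq] at h1 h2; omega
      have hms : MeasurableSet {ω | m + 1 ≤ G ω} := by
        have : {ω | m + 1 ≤ G ω} = G ⁻¹' {k | m + 1 ≤ k} := rfl
        rw [this]; exact hG ((Set.to_countable _).measurableSet)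
      have hsum : μ {ω | m ≤ G ω} = μ {ω | G ω = m} + μ {ω | m + 1 ≤ G ω} := by
        rw [hsplit, measure_union hdisj hms]
      rw [ih hm, hdist m hm] at hsum
      have harith : (1 - q) ^ (m - 1) = (1 - q) ^ (m - 1) * q + (1 - q) ^ (m + 1 - 1) := by
        have : m + 1 - 1 = (m - 1) + 1 := by omega
        rw [this, pow_succ]; ring
      have : ENNReal.ofReal ((1 - q) ^ (m - 1) * q) + μ {ω | m + 1 ≤ G ω}
          = ENNReal.ofReal ((1 - q) ^ (m - 1) * q) + ENNReal.ofReal ((1 - q) ^ (m + 1 - 1)) := by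
        rw [← ENNReal.ofReal_add (by positivity) (by positivity), ← harith, hsum]
      exact (ENNReal.add_right_inj ENNReal.ofReal_ne_top).mp this
    · have hm : m = 0 := by omega
      subst hm
      have : {ω | 1 ≤ G ω} = Set.univ := by
        ext ω; simp [hGpos ω]
      rw [this]
      simp

/-- For i.i.d. `G₁, G₂ ~ Geom(q)` (on `{1, 2, …}`) and integers `k₁ < k₂`,
`min(k₁, G₁) + min(k₂, G₂) ⪯ min(k₁+1, G₁) + min(k₂-1, G₂)`. -/
theorem stmt_3 {Ω : Type*} [MeasurableSpace Ω] (μ : Measure Ω) [IsProbabilityMeasure μ]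
    (q : ℝ) (hq0 : 0 < q) (hq1 : q ≤ 1)
    (G₁ G₂ : Ω → ℕ) (hG₁ : Measurable G₁) (hG₂ : Measurable G₂)
    (hG₁pos : ∀ ω, 1 ≤ G₁ ω) (hG₂pos : ∀ ω, 1 ≤ G₂ ω)
    (hdist₁ : ∀ k : ℕ, 1 ≤ k →
      μ {ω | G₁ ω = k} = ENNReal.ofReal ((1 - q) ^ (k - 1) * q))
    (hdist₂ : ∀ k : ℕ, 1 ≤ k →
      μ {ω | G₂ ω = k} = ENNReal.ofReal ((1 - q) ^ (k - 1) * q))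
    (hindep : IndepFun G₁ G₂ μ)
    (k₁ k₂ : ℤ) (hk : k₁ < k₂) :
    ∀ z : ℝ,
      μ {ω | z ≤ ((min k₁ (G₁ ω : ℤ) + min k₂ (G₂ ω : ℤ) : ℤ) : ℝ)} ≤
        μ {ω | z ≤ ((min (k₁ + 1) (G₁ ω : ℤ) + min (k₂ - 1) (G₂ ω : ℤ) : ℤ) : ℝ)} := by
  intro z
  have hp0 : 0 ≤ 1 - q := by linarith
  set n : ℤ := ⌈z⌉ with hn
  have hsetL : {ω | z ≤ ((min k₁ (G₁ ω : ℤ) + min k₂ (G₂ ω : ℤ) : ℤ) : ℝ)}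
      = {ω | n ≤ min k₁ (G₁ ω : ℤ) + min k₂ (G₂ ω : ℤ)} := by
    ext ω; simp only [Set.mem_setOf_eq, hn, Int.ceil_le]
  have hsetR : {ω | z ≤ ((min (k₁ + 1) (G₁ ω : ℤ) + min (k₂ - 1) (G₂ ω : ℤ) : ℤ) : ℝ)}
      = {ω | n ≤ min (k₁ + 1) (G₁ ω : ℤ) + min (k₂ - 1) (G₂ ω : ℤ)} := by
    ext ω; simp only [Set.mem_setOf_eq, hn, Int.ceil_le]
  rw [hsetL, hsetR]
  set L := {ω | n ≤ min k₁ (G₁ ω : ℤ) + min k₂ (G₂ ω : ℤ)} with hL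
  set R := {ω | n ≤ min (k₁ + 1) (G₁ ω : ℤ) + min (k₂ - 1) (G₂ ω : ℤ)} with hR
  have hLm : MeasurableSet L := by
    have : L = (fun ω => (G₁ ω, G₂ ω)) ⁻¹'
        {pr : ℕ × ℕ | n ≤ min k₁ (pr.1 : ℤ) + min k₂ (pr.2 : ℤ)} := rfl
    rw [this]; exact (hG₁.prodMk hG₂) ((Set.to_countable _).measurableSet)
  have hRm : MeasurableSet R := by
    have : R = (fun ω => (G₁ ω, G₂ ω)) ⁻¹'
        {pr : ℕ × ℕ | n ≤ min (k₁ + 1) (pr.1 : ℤ) + min (k₂ - 1) (pr.2 : ℤ)} := rfl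
    rw [this]; exact (hG₁.prodMk hG₂) ((Set.to_countable _).measurableSet)
  by_cases hbig : k₁ + k₂ < n
  · have : L = ∅ := by
      ext ω
      simp only [hL, Set.mem_setOf_eq, Set.mem_empty_iff_false, iff_false, not_le]
      omega
    simp [this]
  push_neg at hbig
  -- reduce to the symmetric-difference pieces
  have hdiff : μ (L \ R) ≤ μ (R \ L) := by
    by_cases ha : n - k₂ ≤ 0
    · have : L \ R = ∅ := by
        ext ω
        have h1 := hG₁pos ω
        simp only [Set.mem_diff, hL, hR, Set.mem_setOf_eq, Set.mem_empty_iff_false,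
          iff_false, not_and, not_not, not_le]
        omega
      simp [this]
    push_neg at ha
    have hk₁ : 1 ≤ k₁ := by omega
    set A : ℕ := (n - k₂).toNat with hA
    set M : ℕ := (max (n - k₁) k₂).toNat with hM
    set M' : ℕ := (max (n - k₂ + 1) (k₁ + 1)).toNat with hM'
    set C : ℕ := (n - k₁ - 1).toNat with hC
    have hA1 : 1 ≤ A := by omega
    have hM1 : 1 ≤ M := by omega
    have hM'1 : 1 ≤ M' := by omega
    have hC1 : 1 ≤ C := by omega
    have hLR : L \ R = G₁ ⁻¹' {A} ∩ G₂ ⁻¹' {k | M ≤ k} := by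
      ext ω
      have h1 := hG₁pos ω
      have h2 := hG₂pos ω
      simp only [Set.mem_diff, hL, hR, Set.mem_setOf_eq, Set.mem_inter_iff,
        Set.mem_preimage, Set.mem_singleton_iff, not_le]
      omega
    have hRL : R \ L = G₁ ⁻¹' {k | M' ≤ k} ∩ G₂ ⁻¹' {C} := by
      ext ω
      have h1 := hG₁pos ω
      have h2 := hG₂pos ω
      simp only [Set.mem_diff, hL, hR, Set.mem_setOf_eq, Set.mem_inter_iff,
        Set.mem_preimage, Set.mem_singleton_iff, not_le]
      omega
    have hindmul := hindep.measure_inter_preimage_eq_mul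
    have e1 : μ (L \ R) = μ (G₁ ⁻¹' {A}) * μ (G₂ ⁻¹' {k | M ≤ k}) := by
      rw [hLR]
      exact hindmul _ _ ((Set.to_countable _).measurableSet) ((Set.to_countable _).measurableSet)
    have e2 : μ (R \ L) = μ (G₁ ⁻¹' {k | M' ≤ k}) * μ (G₂ ⁻¹' {C}) := by
      rw [hRL]
      exact hindmul _ _ ((Set.to_countable _).measurableSet) ((Set.to_countable _).measurableSet)
    have v1 : μ (G₁ ⁻¹' {A}) = ENNReal.ofReal ((1 - q) ^ (A - 1) * q) := hdist₁ A hA1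
    have v2 : μ (G₂ ⁻¹' {k | M ≤ k}) = ENNReal.ofReal ((1 - q) ^ (M - 1)) :=
      geom_tail μ q hq0 hq1 G₂ hG₂ hG₂pos hdist₂ M hM1
    have v3 : μ (G₁ ⁻¹' {k | M' ≤ k}) = ENNReal.ofReal ((1 - q) ^ (M' - 1)) :=
      geom_tail μ q hq0 hq1 G₁ hG₁ hG₁pos hdist₁ M' hM'1
    have v4 : μ (G₂ ⁻¹' {C}) = ENNReal.ofReal ((1 - q) ^ (C - 1) * q) := hdist₂ C hC1
    rw [e1, e2, v1, v2, v3, v4, ← ENNReal.ofReal_mul (by positivity),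
      ← ENNReal.ofReal_mul (by positivity)]
    have hexp : (A - 1) + (M - 1) = (M' - 1) + (C - 1) := by omega
    have h1 : (1 - q) ^ (A - 1) * q * (1 - q) ^ (M - 1)
        = q * (1 - q) ^ ((A - 1) + (M - 1)) := by rw [pow_add]; ring
    have h2 : (1 - q) ^ (M' - 1) * ((1 - q) ^ (C - 1) * q)
        = q * (1 - q) ^ ((M' - 1) + (C - 1)) := by rw [pow_add]; ring
    rw [h1, h2, hexp]
  calc μ L = μ (L ∩ R) + μ (L \ R) := (measure_inter_add_diff L hRm).symm
    _ ≤ μ (L ∩ R) + μ (R \ L) := add_le_add le_rfl hdiff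
    _ = μ (R ∩ L) + μ (R \ L) := by rw [Set.inter_comm]
    _ = μ R := measure_inter_add_diff R hLm
end

section
/- Let q ∈ (0,1], let m be a positive integer and let G₁, …, G_m ~ Geom(q) be i.i.d. random variables. Let k₁, …, k_m and k*₁, …, k*_m be non-negative integers with Σ_{i=1}^m k_i = Σ_{i=1}^m k*_i, and suppose the vector k* is balanced, i.e., |k*_i − k*_j| ≤ 1 for all i, j ∈ [m]. Then Σ_{i=1}^m (k*_i − G_i)₊ ⪯ Σ_{i=1}^m (k_i − G_i)₊, i.e., for all z ∈ ℝ, P(Σ_{i=1}^m (k*_i − G_i)₊ ≥ z) ≤ P(Σ_{i=1}^m (k_i − G_i)₊ ≥ z). -/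
open MeasureTheory ProbabilityTheory
open scoped ENNReal

namespace Stmt5Aux

variable {m : ℕ}

noncomputable def Wgt (q : ℝ) : ℕ → ℝ≥0∞
  | 0 => 0
  | (n+1) => ENNReal.ofReal ((1 - q) ^ n * q)

noncomputable def Tf (q : ℝ) (c : ℕ) (w : ℝ) : ℝ≥0∞ :=
  ∑' v : ℕ, if w ≤ ((max ((c:ℤ) - v) 0 : ℤ) : ℝ) then Wgt q v else 0

noncomputable def H2 (q : ℝ) (a b : ℕ) (w : ℝ) : ℝ≥0∞ :=
  ∑' u : ℕ, ∑' v : ℕ,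
    if w ≤ ((max ((a:ℤ) - u) 0 + max ((b:ℤ) - v) 0 : ℤ) : ℝ) then Wgt q u * Wgt q v else 0

noncomputable def Fk (q : ℝ) (k : Fin m → ℕ) (z : ℝ) : ℝ≥0∞ :=
  ∑' g : Fin m → ℕ,
    if z ≤ ((∑ i, max ((k i : ℤ) - g i) 0 : ℤ) : ℝ) then ∏ i, Wgt q (g i) else 0

lemma Tf_mono (q : ℝ) (a b : ℕ) (w : ℝ) (hba : b ≤ a) :
    Tf q a (w - b) ≤ Tf q b (w - a) := by
  apply ENNReal.summable.tsum_le_tsum _ ENNReal.summable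
  intro v
  split_ifs with h1 h2
  · exact le_rfl
  · exfalso
    apply h2
    have key : max ((a:ℤ) - v) 0 + (b:ℤ) ≤ max ((b:ℤ) - v) 0 + (a:ℤ) := by
      have : (b:ℤ) ≤ a := by exact_mod_cast hba
      omega
    have h1' : w - (b:ℝ) ≤ ((max ((a:ℤ) - v) 0 : ℤ) : ℝ) := h1
    have h3 : w ≤ ((max ((a:ℤ) - v) 0 + (b:ℤ) : ℤ) : ℝ) := by push_cast at h1' ⊢; linarith
    have h4 : w ≤ ((max ((b:ℤ) - v) 0 + (a:ℤ) : ℤ) : ℝ) := le_trans h3 (by exact_mod_cast key)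
    push_cast at h4 ⊢
    linarith
  · exact zero_le
  · exact le_rfl

lemma peel2 (f : ℕ → ℝ≥0∞) : ∑' u, f u = f 0 + f 1 + ∑' u, f (u+2) := by
  rw [tsum_eq_zero_add' ENNReal.summable,
    tsum_eq_zero_add' (f := fun n => f (n+1)) ENNReal.summable, ← add_assoc]

lemma H2_symm (q : ℝ) (a b : ℕ) (w : ℝ) : H2 q a b w = H2 q b a w := by
  rw [H2, H2, ENNReal.tsum_comm]
  apply tsum_congr; intro u
  apply tsum_congr; intro v
  rw [add_comm (max ((b:ℤ) - u) 0), mul_comm]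

lemma H2_rec (q : ℝ) (hq1 : q ≤ 1) (a b : ℕ) (w : ℝ) :
    H2 q (a+1) b w = Wgt q 1 * Tf q b (w - a) + ENNReal.ofReal (1-q) * H2 q a b w := by
  have hW2 : ∀ n : ℕ, Wgt q (n+2) = ENNReal.ofReal (1-q) * Wgt q (n+1) := by
    intro n
    simp only [Wgt, pow_succ]
    rw [← ENNReal.ofReal_mul (by linarith)]
    ring_nf
  rw [H2, peel2]
  have h0 : (∑' v : ℕ,
      if w ≤ ((max (((a+1:ℕ):ℤ) - ((0:ℕ):ℤ)) 0 + max ((b:ℤ) - v) 0 : ℤ) : ℝ)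
      then Wgt q 0 * Wgt q v else 0) = 0 := by
    simp [Wgt]
  have h1 : (∑' v : ℕ,
      if w ≤ ((max (((a+1:ℕ):ℤ) - ((1:ℕ):ℤ)) 0 + max ((b:ℤ) - v) 0 : ℤ) : ℝ)
      then Wgt q 1 * Wgt q v else 0) = Wgt q 1 * Tf q b (w - a) := by
    rw [Tf, ← ENNReal.tsum_mul_left]
    apply tsum_congr; intro v
    rw [mul_ite, mul_zero]
    congr 1
    apply propext
    have he : max (((a+1:ℕ):ℤ) - ((1:ℕ):ℤ)) 0 = (a:ℤ) := by push_cast; omega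
    rw [he]
    push_cast
    constructor <;> intro <;> linarith
  have h2 : (∑' u : ℕ, ∑' v : ℕ,
      if w ≤ ((max (((a+1:ℕ):ℤ) - ((u+2:ℕ):ℤ)) 0 + max ((b:ℤ) - v) 0 : ℤ) : ℝ)
      then Wgt q (u+2) * Wgt q v else 0) = ENNReal.ofReal (1-q) * H2 q a b w := by
    rw [H2, ← ENNReal.tsum_mul_left]
    rw [tsum_eq_zero_add' (f := fun u => ENNReal.ofReal (1-q) * ∑' v : ℕ,
      if w ≤ ((max ((a:ℤ) - u) 0 + max ((b:ℤ) - v) 0 : ℤ) : ℝ) then Wgt q u * Wgt q v else 0)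
      ENNReal.summable]
    have hz : ENNReal.ofReal (1-q) * (∑' v : ℕ,
        if w ≤ ((max ((a:ℤ) - ((0:ℕ):ℤ)) 0 + max ((b:ℤ) - v) 0 : ℤ) : ℝ)
        then Wgt q 0 * Wgt q v else 0) = 0 := by
      simp [Wgt]
    rw [hz, zero_add]
    apply tsum_congr; intro u
    rw [← ENNReal.tsum_mul_left]
    apply tsum_congr; intro v
    rw [mul_ite, mul_zero]
    have he2 : max (((a+1:ℕ):ℤ) - ((u+2:ℕ):ℤ)) 0 = max ((a:ℤ) - ((u+1:ℕ):ℤ)) 0 := by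
      push_cast; omega
    rw [he2, hW2 u]
    congr 1
    ring
  rw [h0, h1, h2, zero_add]

lemma H2_exchange (q : ℝ) (hq1 : q ≤ 1) (a b : ℕ) (w : ℝ) (h : b + 1 ≤ a) :
    H2 q a (b+1) w ≤ H2 q (a+1) b w := by
  rw [H2_symm q a (b+1) w, H2_rec q hq1 b a w, H2_symm q b a w, H2_rec q hq1 a b w]
  exact add_le_add_left (mul_le_mul_right (Tf_mono q a b w (by omega)) _) _

def splitEquiv (i j : Fin m) (hij : i ≠ j) :
    (ℕ × ℕ × {h : Fin m → ℕ // h i = 0 ∧ h j = 0}) ≃ (Fin m → ℕ) where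
  toFun p := Function.update (Function.update p.2.2.1 i p.1) j p.2.1
  invFun g := ⟨g i, g j, ⟨Function.update (Function.update g i 0) j 0, by
    simp [Function.update_apply, hij]⟩⟩
  left_inv p := by
    obtain ⟨u, v, h, hi, hj⟩ := p
    simp only [Prod.mk.injEq]
    refine ⟨?_, ?_, Subtype.ext ?_⟩
    · rw [Function.update_of_ne hij, Function.update_self]
    · rw [Function.update_self]
    · funext x
      by_cases hx1 : x = i
      · subst hx1; simp [Function.update_apply, hij, hi]
      · by_cases hx2 : x = j
        · subst hx2; simp [Function.update_apply, hij.symm, hj]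
        · simp [Function.update_apply, hx1, hx2]
  right_inv g := by
    funext x
    by_cases hx1 : x = i
    · subst hx1; simp [Function.update_apply, hij]
    · by_cases hx2 : x = j
      · subst hx2; simp [Function.update_apply, hij.symm]
      · simp [Function.update_apply, hx1, hx2]

lemma tsum_comm3 {α β γ : Type*} (f : α × β × γ → ℝ≥0∞) :
    ∑' p : α × β × γ, f p = ∑' c : γ, ∑' a : α, ∑' b : β, f (a, b, c) := by
  rw [ENNReal.tsum_prod']
  have h1 : ∀ a : α, (∑' p : β × γ, f (a, p)) = ∑' b : β, ∑' c : γ, f (a, b, c) :=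
    fun a => ENNReal.tsum_prod'
  calc (∑' a : α, ∑' p : β × γ, f (a, p)) = ∑' a : α, ∑' b : β, ∑' c : γ, f (a, b, c) :=
        tsum_congr h1
    _ = ∑' a : α, ∑' c : γ, ∑' b : β, f (a, b, c) := tsum_congr (fun a => ENNReal.tsum_comm)
    _ = ∑' c : γ, ∑' a : α, ∑' b : β, f (a, b, c) := ENNReal.tsum_comm

lemma Fk_decomp (q : ℝ) (i j : Fin m) (hij : i ≠ j) (k : Fin m → ℕ) (z : ℝ) :
    Fk q k z = ∑' h : {h : Fin m → ℕ // h i = 0 ∧ h j = 0},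
      H2 q (k i) (k j)
        (z - ((∑ x ∈ (Finset.univ.erase j).erase i, max ((k x : ℤ) - h.1 x) 0 : ℤ) : ℝ)) *
      ∏ x ∈ (Finset.univ.erase j).erase i, Wgt q (h.1 x) := by
  classical
  set E2 : Finset (Fin m) := (Finset.univ.erase j).erase i with hE2
  set S : (Fin m → ℕ) → ℝ≥0∞ := fun g =>
    if z ≤ ((∑ i, max ((k i : ℤ) - g i) 0 : ℤ) : ℝ) then ∏ i, Wgt q (g i) else 0 with hS
  set f : ℕ × ℕ × {h : Fin m → ℕ // h i = 0 ∧ h j = 0} → ℝ≥0∞ := fun p =>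
    (if z - ((∑ x ∈ E2, max ((k x : ℤ) - p.2.2.1 x) 0 : ℤ) : ℝ) ≤
        ((max ((k i:ℤ) - p.1) 0 + max ((k j:ℤ) - p.2.1) 0 : ℤ) : ℝ)
      then Wgt q p.1 * Wgt q p.2.1 else 0) * ∏ x ∈ E2, Wgt q (p.2.2.1 x) with hf
  have hpoint : ∀ p, S (splitEquiv i j hij p) = f p := by
    rintro ⟨u, v, h, hi0, hj0⟩
    have hgi : (splitEquiv i j hij (u, v, ⟨h, hi0, hj0⟩)) i = u := by
      simp only [splitEquiv, Equiv.coe_fn_mk]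
      rw [Function.update_of_ne hij, Function.update_self]
    have hgj : (splitEquiv i j hij (u, v, ⟨h, hi0, hj0⟩)) j = v := by
      simp only [splitEquiv, Equiv.coe_fn_mk]
      rw [Function.update_self]
    have hgx : ∀ x ∈ E2, (splitEquiv i j hij (u, v, ⟨h, hi0, hj0⟩)) x = h x := by
      intro x hx
      rw [hE2, Finset.mem_erase, Finset.mem_erase] at hx
      simp only [splitEquiv, Equiv.coe_fn_mk]
      rw [Function.update_of_ne hx.2.1, Function.update_of_ne hx.1]
    set g := splitEquiv i j hij (u, v, ⟨h, hi0, hj0⟩) with hg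
    have hsum : (∑ x, max ((k x:ℤ) - g x) 0) =
        max ((k i:ℤ) - u) 0 + max ((k j:ℤ) - v) 0 + ∑ x ∈ E2, max ((k x:ℤ) - h x) 0 := by
      rw [← Finset.add_sum_erase _ _ (Finset.mem_univ j),
        ← Finset.add_sum_erase _ _ (Finset.mem_erase.2 ⟨hij, Finset.mem_univ i⟩), hgi, hgj]
      rw [Finset.sum_congr rfl (fun x hx => by rw [hgx x hx])]
      ring
    have hprod : (∏ x, Wgt q (g x)) =
        Wgt q u * Wgt q v * ∏ x ∈ E2, Wgt q (h x) := by
      rw [← Finset.mul_prod_erase _ _ (Finset.mem_univ j),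
        ← Finset.mul_prod_erase _ _ (Finset.mem_erase.2 ⟨hij, Finset.mem_univ i⟩), hgi, hgj]
      rw [Finset.prod_congr rfl (fun x hx => by rw [hgx x hx])]
      ring
    show S g = _
    rw [hS]
    simp only []
    rw [hsum, hprod, hf]
    simp only []
    rw [ite_mul, zero_mul]
    congr 1
    apply propext
    push_cast
    constructor <;> intro <;> linarith
  have key := Equiv.tsum_eq (splitEquiv i j hij) S
  rw [Fk, ← hS, ← key]
  rw [tsum_congr hpoint, tsum_comm3]
  apply tsum_congr; intro h
  rw [H2, ← ENNReal.tsum_mul_right]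
  apply tsum_congr; intro u
  rw [← ENNReal.tsum_mul_right]

lemma Fk_exchange (q : ℝ) (hq1 : q ≤ 1) (i j : Fin m) (hij : i ≠ j) (k : Fin m → ℕ) (z : ℝ)
    (hk : k j + 2 ≤ k i) :
    Fk q (Function.update (Function.update k i (k i - 1)) j (k j + 1)) z ≤ Fk q k z := by
  classical
  set k' := Function.update (Function.update k i (k i - 1)) j (k j + 1) with hk'
  have hki' : k' i = k i - 1 := by
    rw [hk', Function.update_of_ne hij, Function.update_self]
  have hkj' : k' j = k j + 1 := by rw [hk', Function.update_self]
  have hrest : ∀ x ∈ (Finset.univ.erase j).erase i, k' x = k x := by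
    intro x hx
    rw [Finset.mem_erase, Finset.mem_erase] at hx
    rw [hk', Function.update_of_ne hx.2.1, Function.update_of_ne hx.1]
  rw [Fk_decomp q i j hij k z, Fk_decomp q i j hij k' z]
  apply ENNReal.summable.tsum_le_tsum _ ENNReal.summable
  intro h
  have hc : (∑ x ∈ (Finset.univ.erase j).erase i, max ((k' x:ℤ) - h.1 x) 0) =
      ∑ x ∈ (Finset.univ.erase j).erase i, max ((k x:ℤ) - h.1 x) 0 :=
    Finset.sum_congr rfl (fun x hx => by rw [hrest x hx])
  rw [hc, hki', hkj']
  apply mul_le_mul_left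
  have ha : k i = (k i - 1) + 1 := by omega
  calc H2 q (k i - 1) (k j + 1) _ ≤ H2 q ((k i - 1)+1) (k j) _ :=
        H2_exchange q hq1 _ _ _ (by omega)
    _ = H2 q (k i) (k j) _ := by rw [← ha]

lemma Fk_perm (q : ℝ) (k : Fin m → ℕ) (σ : Equiv.Perm (Fin m)) (z : ℝ) :
    Fk q (k ∘ σ) z = Fk q k z := by
  classical
  set S : (Fin m → ℕ) → ℝ≥0∞ := fun g =>
    if z ≤ ((∑ i, max ((k i : ℤ) - g i) 0 : ℤ) : ℝ) then ∏ i, Wgt q (g i) else 0 with hS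
  set e : (Fin m → ℕ) ≃ (Fin m → ℕ) := Equiv.arrowCongr σ (Equiv.refl ℕ) with he
  have hcomp : ∀ g : Fin m → ℕ, e g = g ∘ σ.symm := by
    intro g; funext x; simp [he, Equiv.arrowCongr]
  have key : ∀ g : Fin m → ℕ,
      (if z ≤ ((∑ i, max (((k ∘ σ) i : ℤ) - g i) 0 : ℤ) : ℝ)
        then ∏ i, Wgt q (g i) else 0) = S (e g) := by
    intro g
    rw [hcomp g, hS]
    simp only [Function.comp_apply]
    have h1 : (∑ x, max ((k x : ℤ) - g (σ.symm x)) 0) = ∑ x, max ((k (σ x) : ℤ) - g x) 0 := by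
      rw [← Equiv.sum_comp σ (fun x => max ((k x : ℤ) - g (σ.symm x)) 0)]
      simp
    have h2 : (∏ x, Wgt q (g (σ.symm x))) = ∏ x, Wgt q (g x) := by
      rw [← Equiv.prod_comp σ (fun x => Wgt q (g (σ.symm x)))]
      simp
    rw [h1, h2]
  rw [Fk, tsum_congr key, Equiv.tsum_eq e S, Fk]

lemma balanced_char (hm : 0 < m) (f : Fin m → ℕ) (hbal : ∀ i j, f i ≤ f j + 1) :
    (∀ i, f i = (∑ x, f x) / m ∨ f i = (∑ x, f x) / m + 1) ∧
    Fintype.card {i // f i = (∑ x, f x) / m + 1} = (∑ x, f x) % m := by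
  classical
  obtain ⟨i₀, -, hmin⟩ := Finset.exists_min_image Finset.univ f
    ⟨⟨0, hm⟩, Finset.mem_univ _⟩
  set c₀ := f i₀ with hc₀
  have hopt : ∀ i, f i = c₀ ∨ f i = c₀ + 1 := by
    intro i
    have h1 : c₀ ≤ f i := hmin i (Finset.mem_univ i)
    have h2 : f i ≤ c₀ + 1 := hbal i i₀
    omega
  set s₀ := Finset.card (Finset.univ.filter (fun i => f i = c₀ + 1)) with hs₀
  have hsum : ∑ x, f x = m * c₀ + s₀ := by
    have h1 : ∀ i, f i = c₀ + (if f i = c₀ + 1 then 1 else 0) := by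
      intro i; rcases hopt i with h | h <;> simp [h]
    rw [Finset.sum_congr rfl (fun i _ => h1 i), Finset.sum_add_distrib]
    congr 1
    · simp [Finset.card_univ, mul_comm]
    · rw [hs₀, Finset.card_filter]
  have hi₀ : i₀ ∉ Finset.univ.filter (fun i => f i = c₀ + 1) := by
    simp only [Finset.mem_filter, Finset.mem_univ, true_and]
    omega
  have hs₀lt : s₀ < m := by
    have hss : Finset.univ.filter (fun i => f i = c₀ + 1) ⊂ Finset.univ := by
      rw [Finset.ssubset_univ_iff]
      intro h; rw [h] at hi₀; exact hi₀ (Finset.mem_univ i₀)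
    have := Finset.card_lt_card hss
    simpa [Finset.card_univ] using this
  have hdiv : (∑ x, f x) / m = c₀ := by
    rw [hsum, Nat.mul_add_div hm, Nat.div_eq_of_lt hs₀lt, add_zero]
  have hmod : (∑ x, f x) % m = s₀ := by
    rw [hsum, Nat.mul_add_mod, Nat.mod_eq_of_lt hs₀lt]
  refine ⟨?_, ?_⟩
  · intro i; rw [hdiv]; exact hopt i
  · rw [hdiv, hmod, Fintype.card_subtype]

lemma balanced_perm (hm : 0 < m) (f g : Fin m → ℕ)
    (hbalf : ∀ i j, f i ≤ f j + 1) (hbalg : ∀ i j, g i ≤ g j + 1)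
    (hsum : ∑ x, f x = ∑ x, g x) :
    ∃ σ : Equiv.Perm (Fin m), ∀ i, g (σ i) = f i := by
  classical
  obtain ⟨hoptf, hcardf⟩ := balanced_char hm f hbalf
  obtain ⟨hoptg, hcardg⟩ := balanced_char hm g hbalg
  rw [← hsum] at hoptg hcardg
  rw [← hcardf] at hcardg
  set c := (∑ x, f x) / m with hc
  have hcards' : Fintype.card {i // ¬ (f i = c + 1)} = Fintype.card {i // ¬ (g i = c + 1)} := by
    rw [Fintype.card_subtype_compl, Fintype.card_subtype_compl, hcardg]
  set ep : {i // f i = c + 1} ≃ {i // g i = c + 1} := Fintype.equivOfCardEq hcardg.symm with hep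
  set en : {i // ¬ (f i = c + 1)} ≃ {i // ¬ (g i = c + 1)} := Fintype.equivOfCardEq hcards' with hen
  refine ⟨(Equiv.sumCompl (fun i => f i = c + 1)).symm.trans
    ((ep.sumCongr en).trans (Equiv.sumCompl (fun i => g i = c + 1))), ?_⟩
  intro i
  by_cases hi : f i = c + 1
  · have h1 : (Equiv.sumCompl (fun i => f i = c + 1)).symm i = Sum.inl ⟨i, hi⟩ :=
      Equiv.sumCompl_symm_apply_of_pos (p := fun i => f i = c + 1) hi
    simp only [Equiv.trans_apply, h1, Equiv.sumCongr_apply, Sum.map_inl,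
      Equiv.sumCompl_apply_inl]
    have h2 : g ((ep ⟨i, hi⟩ : {i // g i = c + 1}) : Fin m) = c + 1 := (ep ⟨i, hi⟩).2
    rw [h2, hi]
  · have h1 : (Equiv.sumCompl (fun i => f i = c + 1)).symm i = Sum.inr ⟨i, hi⟩ :=
      Equiv.sumCompl_symm_apply_of_neg (p := fun i => f i = c + 1) hi
    simp only [Equiv.trans_apply, h1, Equiv.sumCongr_apply, Sum.map_inr,
      Equiv.sumCompl_apply_inr]
    have h2 : ¬ (g ((en ⟨i, hi⟩ : {i // ¬ (g i = c + 1)}) : Fin m) = c + 1) := (en ⟨i, hi⟩).2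
    have h3 := hoptg ((en ⟨i, hi⟩ : {i // ¬ (g i = c + 1)}) : Fin m)
    have h4 := hoptf i
    rcases h3 with h3 | h3
    · rw [h3]; omega
    · exact absurd h3 h2

lemma Fk_of_balanced (q : ℝ) (hm : 0 < m) (z : ℝ) (k kstar : Fin m → ℕ)
    (hsum : ∑ x, k x = ∑ x, kstar x)
    (hkbal : ∀ i j, k i ≤ k j + 1) (hbal : ∀ i j, kstar i ≤ kstar j + 1) :
    Fk q kstar z = Fk q k z := by
  obtain ⟨σ, hσ⟩ := balanced_perm hm kstar k hbal hkbal hsum.symm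
  have h1 : k ∘ σ = kstar := funext hσ
  rw [← h1, Fk_perm]

lemma Fk_min (q : ℝ) (hq1 : q ≤ 1) (hm : 0 < m) (z : ℝ) :
    ∀ (N : ℕ) (k kstar : Fin m → ℕ), (∑ x, (k x)^2) ≤ N → ∑ x, k x = ∑ x, kstar x →
    (∀ i j, kstar i ≤ kstar j + 1) → Fk q kstar z ≤ Fk q k z := by
  intro N
  induction N with
  | zero =>
    intro k kstar hN hsum hbal
    have hk0 : ∀ x, k x ≤ 1 := by
      intro x
      by_contra hx
      push_neg at hx
      have h1 : (k x)^2 ≤ ∑ y, (k y)^2 :=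
        Finset.single_le_sum (f := fun y => (k y)^2) (fun y _ => Nat.zero_le _) (Finset.mem_univ x)
      nlinarith
    exact le_of_eq (Fk_of_balanced q hm z k kstar hsum
      (fun i j => le_trans (hk0 i) (by omega)) hbal)
  | succ N ih =>
    intro k kstar hN hsum hbal
    classical
    by_cases hb : ∃ i j, k j + 2 ≤ k i
    · obtain ⟨i, j, hij2⟩ := hb
      have hij : i ≠ j := by rintro rfl; omega
      set k' := Function.update (Function.update k i (k i - 1)) j (k j + 1) with hk'
      have hki' : k' i = k i - 1 := by
        rw [hk', Function.update_of_ne hij, Function.update_self]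
      have hkj' : k' j = k j + 1 := by rw [hk', Function.update_self]
      have hrest : ∀ x ∈ (Finset.univ.erase j).erase i, k' x = k x := by
        intro x hx
        rw [Finset.mem_erase, Finset.mem_erase] at hx
        rw [hk', Function.update_of_ne hx.2.1, Function.update_of_ne hx.1]
      have hsplit : ∀ (f : Fin m → ℕ), (∑ x, f x) =
          f i + f j + ∑ x ∈ (Finset.univ.erase j).erase i, f x := by
        intro f
        rw [← Finset.add_sum_erase _ _ (Finset.mem_univ j),
          ← Finset.add_sum_erase _ _ (Finset.mem_erase.2 ⟨hij, Finset.mem_univ i⟩)]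
        ring
      have hrest2 : (∑ x ∈ (Finset.univ.erase j).erase i, (k' x)^2) =
          ∑ x ∈ (Finset.univ.erase j).erase i, (k x)^2 :=
        Finset.sum_congr rfl (fun x hx => by rw [hrest x hx])
      have hrest1 : (∑ x ∈ (Finset.univ.erase j).erase i, k' x) =
          ∑ x ∈ (Finset.univ.erase j).erase i, k x :=
        Finset.sum_congr rfl (fun x hx => by rw [hrest x hx])
      have hsum' : ∑ x, k' x = ∑ x, k x := by
        rw [hsplit k', hsplit k, hrest1, hki', hkj']
        omega
      have hsq : ∑ x, (k' x)^2 ≤ N := by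
        have h1 : (k i - 1)^2 + (k j + 1)^2 < (k i)^2 + (k j)^2 := by
          obtain ⟨a', ha'⟩ : ∃ a', k i = a' + 1 := ⟨k i - 1, by omega⟩
          have hab : k j + 1 ≤ a' := by omega
          rw [ha']
          simp only [Nat.add_sub_cancel]
          nlinarith
        have h2 := hsplit (fun x => (k' x)^2)
        have h3 := hsplit (fun x => (k x)^2)
        rw [hki', hkj'] at h2
        omega
      exact le_trans (ih k' kstar hsq (hsum'.trans hsum) hbal)
        (Fk_exchange q hq1 i j hij k z hij2)
    · push_neg at hb
      have hkbal : ∀ i j, k i ≤ k j + 1 := by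
        intro i j
        have := hb i j
        omega
      exact le_of_eq (Fk_of_balanced q hm z k kstar hsum hkbal hbal)

lemma meas_eq {Ω : Type*} [MeasurableSpace Ω] (μ : Measure Ω)
    (q : ℝ) (G : Fin m → Ω → ℕ) (hGmeas : ∀ i, Measurable (G i))
    (hGpos : ∀ i ω, 1 ≤ G i ω)
    (hdist : ∀ i, ∀ n : ℕ, 1 ≤ n →
      μ {ω | G i ω = n} = ENNReal.ofReal ((1 - q) ^ (n - 1) * q))
    (hindep : iIndepFun G μ)
    (k : Fin m → ℕ) (z : ℝ) :
    μ {ω | z ≤ ((∑ i, max ((k i : ℤ) - (G i ω : ℤ)) 0 : ℤ) : ℝ)} = Fk q k z := by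
  classical
  set A : (Fin m → ℕ) → Set Ω := fun g => ⋂ x, G x ⁻¹' {g x} with hA
  set s : (Fin m → ℕ) → Set Ω := fun g =>
    if z ≤ ((∑ i, max ((k i : ℤ) - g i) 0 : ℤ) : ℝ) then A g else ∅ with hs
  have hset : {ω | z ≤ ((∑ i, max ((k i : ℤ) - (G i ω : ℤ)) 0 : ℤ) : ℝ)} = ⋃ g, s g := by
    ext ω
    simp only [Set.mem_setOf_eq, Set.mem_iUnion]
    constructor
    · intro hω
      refine ⟨fun x => G x ω, ?_⟩
      rw [hs]
      simp only []
      rw [if_pos hω]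
      exact Set.mem_iInter.2 (fun x => rfl)
    · rintro ⟨g, hg⟩
      rw [hs] at hg
      simp only [] at hg
      split_ifs at hg with hcond
      · have hval : ∀ x, G x ω = g x := fun x => Set.mem_iInter.1 hg x
        have : (∑ i, max ((k i : ℤ) - (G i ω : ℤ)) 0) = ∑ i, max ((k i : ℤ) - (g i : ℤ)) 0 :=
          Finset.sum_congr rfl (fun x _ => by rw [hval x])
        rw [this]
        exact hcond
      · exact absurd hg (Set.notMem_empty ω)
  have hdisj : Pairwise (Function.onFun Disjoint s) := by
    intro g g' hgg'
    rw [Function.onFun, Set.disjoint_left]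
    intro ω hω hω'
    rw [hs] at hω hω'
    simp only [] at hω hω'
    split_ifs at hω hω'
    · apply hgg'
      funext x
      have h1 : G x ω = g x := Set.mem_iInter.1 hω x
      have h2 : G x ω = g' x := Set.mem_iInter.1 hω' x
      rw [← h1, h2]
    · exact absurd hω' (Set.notMem_empty ω)
    · exact absurd hω (Set.notMem_empty ω)
    · exact absurd hω (Set.notMem_empty ω)
  have hmeas : ∀ g, MeasurableSet (s g) := by
    intro g
    rw [hs]
    simp only []
    split_ifs
    · exact MeasurableSet.iInter (fun x => hGmeas x (measurableSet_singleton _))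
    · exact MeasurableSet.empty
  rw [hset, measure_iUnion hdisj hmeas, Fk]
  apply tsum_congr
  intro g
  rw [hs]
  simp only []
  split_ifs with hcond
  · -- μ (A g) = ∏ Wgt
    rw [hA]
    simp only []
    rw [hindep.meas_iInter (fun x => ⟨{g x}, measurableSet_singleton _, rfl⟩)]
    apply Finset.prod_congr rfl
    intro x _
    cases hgx : g x with
    | zero =>
      have : G x ⁻¹' {0} = ∅ := by
        ext ω
        simp only [Set.mem_preimage, Set.mem_singleton_iff, Set.mem_empty_iff_false,
          iff_false]
        have := hGpos x ω
        omega
      rw [this, measure_empty, Wgt]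
    | succ n =>
      have h1 : G x ⁻¹' {n+1} = {ω | G x ω = n+1} := by
        ext ω; simp [Set.mem_preimage]
      rw [h1, hdist x (n+1) (by omega), Wgt]
      norm_num
  · rw [measure_empty]

end Stmt5Aux


/-- For i.i.d. `G₁, …, G_m ~ Geom(q)` (on `{1, 2, …}`) and non-negative integer
vectors `k`, `k*` with equal sums such that `k*` is balanced
(`|k*ᵢ - k*ⱼ| ≤ 1` for all `i, j`), one has
`Σᵢ (k*ᵢ - Gᵢ)₊ ⪯ Σᵢ (kᵢ - Gᵢ)₊`. -/
theorem stmt_5 {Ω : Type*} [MeasurableSpace Ω] (μ : Measure Ω) [IsProbabilityMeasure μ]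
    (q : ℝ) (hq0 : 0 < q) (hq1 : q ≤ 1)
    (m : ℕ) (hm : 0 < m)
    (G : Fin m → Ω → ℕ) (hGmeas : ∀ i, Measurable (G i))
    (hGpos : ∀ i ω, 1 ≤ G i ω)
    (hdist : ∀ i, ∀ k : ℕ, 1 ≤ k →
      μ {ω | G i ω = k} = ENNReal.ofReal ((1 - q) ^ (k - 1) * q))
    (hindep : iIndepFun G μ)
    (k kstar : Fin m → ℕ)
    (hsum : ∑ i, k i = ∑ i, kstar i)
    (hbal : ∀ i j, |(kstar i : ℤ) - (kstar j : ℤ)| ≤ 1) :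
    ∀ z : ℝ,
      μ {ω | z ≤ ((∑ i, max ((kstar i : ℤ) - (G i ω : ℤ)) 0 : ℤ) : ℝ)} ≤
        μ {ω | z ≤ ((∑ i, max ((k i : ℤ) - (G i ω : ℤ)) 0 : ℤ) : ℝ)} := by
  intro z
  rw [Stmt5Aux.meas_eq μ q G hGmeas hGpos hdist hindep kstar z,
    Stmt5Aux.meas_eq μ q G hGmeas hGpos hdist hindep k z]
  apply Stmt5Aux.Fk_min q hq1 hm z (∑ x, (k x)^2) k kstar le_rfl hsum
  intro i j
  have h := hbal i j
  rw [abs_le] at h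
  omega
end

section
/- The function g : (0,1) → ℝ defined by g(λ) = (e^{−λ} + λ − 1)/λ is strictly concave on the interval (0,1). -/
open Real Set

private noncomputable def F : ℝ → ℝ := fun x => (Real.exp (-x) + x - 1) / x
private noncomputable def F1 : ℝ → ℝ := fun x => (1 - (x + 1) * Real.exp (-x)) / x ^ 2
private noncomputable def F2 : ℝ → ℝ :=
  fun x => (Real.exp (-x) * (x ^ 2 + 2 * x + 2) - 2) / x ^ 3

private lemma hasDerivAt_F {x : ℝ} (hx : x ≠ 0) : HasDerivAt F (F1 x) x := by
  have hexp : HasDerivAt (fun y : ℝ => Real.exp (-y)) (-Real.exp (-x)) x := by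
    simpa [Function.comp_def] using (Real.hasDerivAt_exp (-x)).comp x ((hasDerivAt_id x).neg)
  have hnum : HasDerivAt (fun y : ℝ => Real.exp (-y) + y - 1) (-Real.exp (-x) + 1) x := by
    simpa using (hexp.add (hasDerivAt_id x)).sub_const 1
  have h : HasDerivAt (fun y => (Real.exp (-y) + y - 1) / y)
      (((-Real.exp (-x) + 1) * x - (Real.exp (-x) + x - 1) * 1) / x ^ 2) x :=
    hnum.div (hasDerivAt_id x) hx
  convert h using 1
  · rfl
  simp only [F1]
  rw [div_eq_div_iff (pow_ne_zero _ hx) (pow_ne_zero _ hx)]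
  ring

private lemma hasDerivAt_F1 {x : ℝ} (hx : x ≠ 0) : HasDerivAt F1 (F2 x) x := by
  have hexp : HasDerivAt (fun y : ℝ => Real.exp (-y)) (-Real.exp (-x)) x := by
    simpa [Function.comp_def] using (Real.hasDerivAt_exp (-x)).comp x ((hasDerivAt_id x).neg)
  have hmul : HasDerivAt (fun y : ℝ => (y + 1) * Real.exp (-y))
      ((1 : ℝ) * Real.exp (-x) + (x + 1) * (-Real.exp (-x))) x :=
    (((hasDerivAt_id x).add_const 1)).mul hexp
  have hnum : HasDerivAt (fun y : ℝ => 1 - (y + 1) * Real.exp (-y))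
      (-((1 : ℝ) * Real.exp (-x) + (x + 1) * (-Real.exp (-x)))) x := by
    simpa [Pi.sub_def] using (hasDerivAt_const x 1).sub hmul
  have hden : HasDerivAt (fun y : ℝ => y ^ 2) (2 * x) x := by
    simpa using hasDerivAt_pow 2 x
  have h : HasDerivAt (fun y => (1 - (y + 1) * Real.exp (-y)) / y ^ 2)
      (((-((1 : ℝ) * Real.exp (-x) + (x + 1) * (-Real.exp (-x)))) * x ^ 2
        - (1 - (x + 1) * Real.exp (-x)) * (2 * x)) / (x ^ 2) ^ 2) x :=
    hnum.div hden (by positivity)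
  convert h using 1
  · rfl
  have hx2 : x ^ 2 ≠ 0 := pow_ne_zero _ hx
  simp only [F2]
  rw [div_eq_div_iff (pow_ne_zero _ hx) (pow_ne_zero _ hx2)]
  ring

/-- The function `λ ↦ (e^{-λ} + λ - 1)/λ` is strictly concave on `(0,1)`. -/
theorem stmt_7 :
    StrictConcaveOn ℝ (Set.Ioo (0 : ℝ) 1)
      (fun lam : ℝ => (Real.exp (-lam) + lam - 1) / lam) := by
  have key : StrictConcaveOn ℝ (Set.Ioo (0 : ℝ) 1) F := by
    apply strictConcaveOn_of_deriv2_neg (convex_Ioo _ _)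
    · apply ContinuousOn.div
      · fun_prop
      · fun_prop
      · intro x hx; exact ne_of_gt hx.1
    · intro x hx
      rw [interior_Ioo] at hx
      have hx0 : (0 : ℝ) < x := hx.1
      have hne : x ≠ 0 := ne_of_gt hx0
      -- deriv F = F1 near x
      have hEq : deriv F =ᶠ[nhds x] F1 := by
        filter_upwards [eventually_ne_nhds hne] with y hy
        exact (hasDerivAt_F hy).deriv
      have h2 : deriv^[2] F x = F2 x := by
        have : deriv (deriv F) x = deriv F1 x := hEq.deriv_eq
        simp only [Function.iterate_succ, Function.iterate_zero, Function.comp_apply, id]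
        rw [this, (hasDerivAt_F1 hne).deriv]
      rw [h2]
      -- show F2 x < 0
      have hb := Real.exp_bound (x := -x) (by rw [abs_neg, abs_of_pos hx0]; linarith [hx.2]) (n := 4) (by norm_num)
      have hsum : ∑ i ∈ Finset.range 4, (-x) ^ i / (Nat.factorial i : ℝ)
          = 1 - x + x ^ 2 / 2 - x ^ 3 / 6 := by
        simp [Finset.sum_range_succ, Nat.factorial]
        ring
      rw [hsum, abs_neg, abs_of_pos hx0] at hb
      have hupper : Real.exp (-x) ≤ 1 - x + x ^ 2 / 2 - x ^ 3 / 6 + x ^ 4 * (5 / 96) := by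
        have := abs_le.mp hb
        have h5 : ((Nat.succ 4 : ℕ) : ℝ) / ((Nat.factorial 4 : ℕ) * (4 : ℕ)) = 5 / 96 := by
          norm_num [Nat.factorial]
        rw [h5] at this
        nlinarith [this.2]
      have hx1 : x < 1 := hx.2
      have hpos : (0 : ℝ) < x ^ 3 := by positivity
      have hnumneg : Real.exp (-x) * (x ^ 2 + 2 * x + 2) - 2 < 0 := by
        nlinarith [hupper, hx0, hx1, sq_nonneg x, sq_nonneg (x - 1), pow_pos hx0 3,
          pow_pos hx0 4, mul_pos (pow_pos hx0 3) (sub_pos.mpr hx1)]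
      show (Real.exp (-x) * (x ^ 2 + 2 * x + 2) - 2) / x ^ 3 < 0
      exact div_neg_of_neg_of_pos hnumneg hpos
  have hF : (fun lam : ℝ => (Real.exp (-lam) + lam - 1) / lam) = F := rfl
  rw [hF]; exact key
end

section
/- Fix A > 0. Then lim_{λ → 0⁺} (1/λ) · [ 1 + ( (1 − λ²/A)^{A/λ} − 1 ) / ( (λ − λ²/A)(1 − λ²/A) ) ] = 1/2 − 1/A. -/
open Filter

set_option maxHeartbeats 1000000 in
/-- For fixed `A > 0`,
`lim_{λ → 0⁺} (1/λ)·[1 + ((1 - λ²/A)^{A/λ} - 1)/((λ - λ²/A)(1 - λ²/A))] = 1/2 - 1/A`. -/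
theorem stmt_13 (A : ℝ) (hA : 0 < A) :
    Tendsto
      (fun lam : ℝ =>
        (1 / lam) *
          (1 + ((1 - lam ^ 2 / A) ^ (A / lam) - 1) /
              ((lam - lam ^ 2 / A) * (1 - lam ^ 2 / A))))
      (nhdsWithin 0 (Set.Ioi 0)) (nhds (1 / 2 - 1 / A)) := by
  have hA' : A ≠ 0 := hA.ne'
  set L := nhdsWithin (0:ℝ) (Set.Ioi 0) with hLdef
  set u : ℝ → ℝ := fun l => (A / l) * Real.log (1 - l ^ 2 / A) with hu
  -- eventual hypotheses on lam
  have hev : ∀ᶠ l in L, 0 < l ∧ l < A ∧ l ≤ 1/2 ∧ l ^ 2 ≤ A/2 := by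
    have h0 : ∀ᶠ l in L, 0 < l := by
      filter_upwards [self_mem_nhdsWithin] with l hl using hl
    have h1 : ∀ᶠ l in L, l < A :=
      (eventually_lt_nhds hA).filter_mono nhdsWithin_le_nhds
    have h2 : ∀ᶠ l in L, l ≤ 1/2 :=
      (eventually_le_nhds (by norm_num : (0:ℝ) < 1/2)).filter_mono nhdsWithin_le_nhds
    have h3 : ∀ᶠ l in L, l ^ 2 ≤ A/2 := by
      have ht : Tendsto (fun l : ℝ => l ^ 2) L (nhds 0) := by
        have := ((continuous_pow 2).tendsto (0:ℝ)).mono_left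
          (nhdsWithin_le_nhds (s := Set.Ioi (0:ℝ)))
        simpa using this
      exact ht.eventually (eventually_le_nhds (by positivity))
    filter_upwards [h0, h1, h2, h3] with l a b c d using ⟨a, b, c, d⟩
  -- key pointwise bounds
  have key : ∀ l : ℝ, 0 < l → l < A → l ≤ 1/2 → l ^ 2 ≤ A/2 →
      |u l + l| ≤ 2 * l ^ 3 / A ∧ |u l| ≤ 2 * l := by
    intro l hl0 hlA hl2 hlsq
    have ht0 : 0 < l ^ 2 / A := by positivity
    have ht : l ^ 2 / A ≤ 1/2 := by
      rw [div_le_iff₀ hA]; nlinarith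
    have ht1 : |l ^ 2 / A| < 1 := by
      rw [abs_of_pos ht0]; linarith
    have hlb := Real.abs_log_sub_add_sum_range_le ht1 1
    rw [abs_of_pos ht0] at hlb
    simp only [Finset.range_one, Finset.sum_singleton] at hlb
    norm_num at hlb
    -- hlb : |l^2/A + log (1 - l^2/A)| ≤ (l^2/A)^2 / (1 - l^2/A)
    have hlog : |Real.log (1 - l ^ 2 / A) + l ^ 2 / A| ≤ 2 * (l ^ 2 / A) ^ 2 := by
      have h2' : (l ^ 2 / A) ^ 2 / (1 - l ^ 2 / A) ≤ 2 * (l ^ 2 / A) ^ 2 := by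
        rw [div_le_iff₀ (by linarith)]
        nlinarith [sq_nonneg (l ^ 2 / A)]
      rw [add_comm]
      exact hlb.trans h2'
    have hid : u l + l = (A / l) * (Real.log (1 - l ^ 2 / A) + l ^ 2 / A) := by
      simp only [hu]
      rw [mul_add, show A / l * (l ^ 2 / A) = l by
        rw [div_mul_div_comm, div_eq_iff (mul_ne_zero hl0.ne' hA')]; ring]
    have hb1 : |u l + l| ≤ 2 * l ^ 3 / A := by
      rw [hid, abs_mul, abs_of_pos (by positivity : (0:ℝ) < A / l)]
      calc A / l * |Real.log (1 - l ^ 2 / A) + l ^ 2 / A|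
          ≤ A / l * (2 * (l ^ 2 / A) ^ 2) :=
            mul_le_mul_of_nonneg_left hlog (by positivity)
        _ = 2 * l ^ 3 / A := by field_simp
    refine ⟨hb1, ?_⟩
    have h3 : 2 * l ^ 3 / A ≤ l := by
      rw [div_le_iff₀ hA]; nlinarith
    calc |u l| = |(u l + l) + (-l)| := by congr 1; ring
      _ ≤ |u l + l| + |(-l)| := abs_add_le _ _
      _ ≤ 2 * l ^ 3 / A + l := by
          rw [abs_neg, abs_of_pos hl0]; linarith
      _ ≤ 2 * l := by linarith
  -- limit of u l / l → -1
  have hul : Tendsto (fun l => u l / l) L (nhds (-1)) := by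
    rw [← tendsto_sub_nhds_zero_iff]
    apply squeeze_zero_norm' (a := fun l => 2 * l ^ 2 / A)
    · filter_upwards [hev] with l ⟨hl0, hlA, hl2, hlsq⟩
      have hb := (key l hl0 hlA hl2 hlsq).1
      have hne : l ≠ 0 := hl0.ne'
      calc ‖u l / l - -1‖ = |(u l + l) / l| := by
            rw [Real.norm_eq_abs]; congr 1; field_simp; ring
        _ = |u l + l| / l := by rw [abs_div, abs_of_pos hl0]
        _ ≤ (2 * l ^ 3 / A) / l := by gcongr
        _ = 2 * l ^ 2 / A := by field_simp
    · have hc : Continuous (fun l : ℝ => 2 * l ^ 2 / A) := by fun_prop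
      have := (hc.tendsto 0).mono_left (nhdsWithin_le_nhds (s := Set.Ioi (0:ℝ)))
      simpa using this
  -- E2 limit
  have hE2 : Tendsto (fun l => (u l + l) / l ^ 2) L (nhds 0) := by
    apply squeeze_zero_norm' (a := fun l => 2 * l / A)
    · filter_upwards [hev] with l ⟨hl0, hlA, hl2, hlsq⟩
      have hb := (key l hl0 hlA hl2 hlsq).1
      have hl2pos : (0:ℝ) < l ^ 2 := by positivity
      rw [Real.norm_eq_abs, abs_div, abs_of_pos hl2pos, div_le_iff₀ hl2pos]
      calc |u l + l| ≤ 2 * l ^ 3 / A := hb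
        _ = 2 * l / A * l ^ 2 := by field_simp
    · have hc : Continuous (fun l : ℝ => 2 * l / A) := by fun_prop
      have := (hc.tendsto 0).mono_left (nhdsWithin_le_nhds (s := Set.Ioi (0:ℝ)))
      simpa using this
  -- E1 limit
  have hE1 : Tendsto
      (fun l => (Real.exp (u l) - 1 - u l - (u l) ^ 2 / 2) / l ^ 2) L (nhds 0) := by
    apply squeeze_zero_norm' (a := fun l => 16/9 * l)
    · filter_upwards [hev] with l ⟨hl0, hlA, hl2, hlsq⟩
      have hb := (key l hl0 hlA hl2 hlsq).2
      have hu1 : |u l| ≤ 1 := by linarith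
      have hexp := Real.exp_bound hu1 (n := 3) (by norm_num)
      have hsum : ∑ m ∈ Finset.range 3, (u l) ^ m / (m.factorial : ℝ)
          = 1 + u l + (u l) ^ 2 / 2 := by
        simp [Finset.sum_range_succ, Nat.factorial]
      rw [hsum] at hexp
      have h1 : |Real.exp (u l) - 1 - u l - (u l) ^ 2 / 2| ≤ |u l| ^ 3 * (4 / (6 * 3)) := by
        have heq : Real.exp (u l) - 1 - u l - (u l) ^ 2 / 2
            = Real.exp (u l) - (1 + u l + (u l) ^ 2 / 2) := by ring
        rw [heq]
        calc |Real.exp (u l) - (1 + u l + (u l) ^ 2 / 2)|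
            ≤ |u l| ^ 3 * ((3:ℕ).succ / ((3:ℕ).factorial * 3)) := hexp
          _ = |u l| ^ 3 * (4 / (6 * 3)) := by norm_num [Nat.factorial]
      have hl2pos : (0:ℝ) < l ^ 2 := by positivity
      rw [Real.norm_eq_abs, abs_div, abs_of_pos hl2pos, div_le_iff₀ hl2pos]
      calc |Real.exp (u l) - 1 - u l - (u l) ^ 2 / 2|
          ≤ |u l| ^ 3 * (4 / (6 * 3)) := h1
        _ ≤ (2 * l) ^ 3 * (4 / (6 * 3)) := by
            have hpow : |u l| ^ 3 ≤ (2 * l) ^ 3 := pow_le_pow_left₀ (abs_nonneg _) hb 3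
            exact mul_le_mul_of_nonneg_right hpow (by norm_num)
        _ = 16/9 * l * l ^ 2 := by ring
    · have hc : Continuous (fun l : ℝ => 16/9 * l) := by fun_prop
      have := (hc.tendsto 0).mono_left (nhdsWithin_le_nhds (s := Set.Ioi (0:ℝ)))
      simpa using this
  -- polynomial part
  have hpoly : Tendsto (fun l : ℝ => -(1/A) - l/A + l ^ 2 / A ^ 2) L (nhds (-(1/A))) := by
    have hc : Continuous (fun l : ℝ => -(1/A) - l/A + l ^ 2 / A ^ 2) := by fun_prop
    have := (hc.tendsto 0).mono_left (nhdsWithin_le_nhds (s := Set.Ioi (0:ℝ)))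
    simpa using this
  -- main numerator limit
  have hMain : Tendsto (fun l =>
      (Real.exp (u l) - 1 - u l - (u l) ^ 2 / 2) / l ^ 2 + (u l + l) / l ^ 2
        + (u l / l) ^ 2 / 2 + (-(1/A) - l/A + l ^ 2 / A ^ 2)) L
      (nhds (1/2 - 1/A)) := by
    have h3 : Tendsto (fun l => (u l / l) ^ 2 / 2) L (nhds ((-1 : ℝ) ^ 2 / 2)) :=
      (hul.pow 2).div_const 2
    have hsum := ((hE1.add hE2).add h3).add hpoly
    have heq : (1:ℝ)/2 - 1/A = 0 + 0 + (-1 : ℝ) ^ 2 / 2 + (-(1/A)) := by ring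
    rw [heq]
    exact hsum
  -- denominator limit
  have hDen : Tendsto (fun l : ℝ => (1 - l/A) * (1 - l ^ 2 / A)) L (nhds 1) := by
    have hc : Continuous (fun l : ℝ => (1 - l/A) * (1 - l ^ 2 / A)) := by fun_prop
    have h2 := (hc.tendsto 0).mono_left (nhdsWithin_le_nhds (s := Set.Ioi (0:ℝ)))
    norm_num at h2
    exact h2
  have hfinal := hMain.div hDen one_ne_zero
  rw [div_one] at hfinal
  refine hfinal.congr' ?_
  filter_upwards [hev] with l ⟨hl0, hlA, hl2, hlsq⟩
  have hne : l ≠ 0 := hl0.ne'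
  have hx : (0:ℝ) < 1 - l ^ 2 / A := by
    rw [sub_pos, div_lt_one hA]; nlinarith
  have hrpow : (1 - l ^ 2 / A) ^ (A / l) = Real.exp (u l) := by
    rw [Real.rpow_def_of_pos hx, hu, mul_comm]
  have h1A : (1:ℝ) - l / A ≠ 0 := by
    have : l / A < 1 := (div_lt_one hA).mpr hlA
    linarith
  have hxne : (1:ℝ) - l ^ 2 / A ≠ 0 := hx.ne'
  have hD2 : l - l ^ 2 / A ≠ 0 := by
    have hpos : 0 < l - l ^ 2 / A := by
      rw [sub_pos, div_lt_iff₀ hA]; nlinarith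
    exact hpos.ne'
  simp only [Pi.div_apply]
  rw [hrpow]
  set E := Real.exp (u l) with hE
  set K := (1 - l / A) * (1 - l ^ 2 / A) with hK
  have hKne : K ≠ 0 := mul_ne_zero h1A hxne
  have hlKne : l * K ≠ 0 := mul_ne_zero hne hKne
  have hKD : (l - l ^ 2 / A) * (1 - l ^ 2 / A) = l * K := by rw [hK]; ring
  have hS : (E - 1 - u l - (u l) ^ 2 / 2) / l ^ 2 + (u l + l) / l ^ 2
      + (u l / l) ^ 2 / 2 + (-(1/A) - l/A + l ^ 2 / A ^ 2)
      = (E - 1 + l * K) / l ^ 2 := by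
    rw [hK]
    field_simp
    ring
  rw [hKD, hS, one_add_div hlKne, div_mul_div_comm, one_mul, div_div,
    show l * (l * K) = l ^ 2 * K from by ring,
    show l * K + (E - 1) = E - 1 + l * K from by ring]
end

section
/- Let λ₀ ∈ (0,1) and let N be a positive integer with ⌊λ₀N⌋ ≥ 2 and N ≥ 2. Let G ~ Geom(1/N). Then E[(1 − (G+1)/(λ₀N))₊] ≥ 1 + ( (1 − 1/N)^{λ₀N} − 1 ) / ( (λ₀ − 1/N)(1 − 1/N) ). -/
set_option maxHeartbeats 1000000

open MeasureTheory ProbabilityTheory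

lemma sum_closed (q c : ℝ) (hq : q ≠ 0) (hc : c ≠ 0) (K : ℕ) :
    ∑ k ∈ Finset.Icc 1 K, (1 - ((k:ℝ)+1)/c) * ((1-q)^(k-1) * q)
      = 1 - (1+q)/(q*c) - (1-q)^K * (q*c - 1 - q - K*q)/(q*c) := by
  induction K with
  | zero => simp; field_simp; ring
  | succ n ih =>
    rw [Finset.sum_Icc_succ_top (by omega), ih]
    simp only [Nat.add_sub_cancel]
    push_cast
    field_simp
    ring

/-- For `λ₀ ∈ (0,1)` and a positive integer `N` with `⌊λ₀N⌋ ≥ 2` and `N ≥ 2`, if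
`G ~ Geom(1/N)` (on `{1, 2, …}`), then
`E[(1 - (G+1)/(λ₀N))₊] ≥ 1 + ((1 - 1/N)^{λ₀N} - 1)/((λ₀ - 1/N)(1 - 1/N))`. -/
theorem stmt_18 {Ω : Type*} [MeasurableSpace Ω] (μ : Measure Ω) [IsProbabilityMeasure μ]
    (lam₀ : ℝ) (h0 : 0 < lam₀) (h1 : lam₀ < 1)
    (N : ℕ) (hN : 2 ≤ N) (hfloor : 2 ≤ ⌊lam₀ * (N : ℝ)⌋)
    (G : Ω → ℕ) (hG : Measurable G) (hGpos : ∀ ω, 1 ≤ G ω)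
    (hdist : ∀ k : ℕ, 1 ≤ k →
      μ {ω | G ω = k} = ENNReal.ofReal ((1 - 1 / (N : ℝ)) ^ (k - 1) * (1 / (N : ℝ)))) :
    1 + ((1 - 1 / (N : ℝ)) ^ (lam₀ * (N : ℝ)) - 1) /
        ((lam₀ - 1 / (N : ℝ)) * (1 - 1 / (N : ℝ))) ≤
      ∫ ω, max (1 - ((G ω : ℝ) + 1) / (lam₀ * N)) 0 ∂μ := by
  classical
  set q : ℝ := 1 / (N:ℝ) with hqdef
  set c : ℝ := lam₀ * (N:ℝ) with hcdef
  have hN2 : (2:ℝ) ≤ (N:ℝ) := by exact_mod_cast hN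
  have hN0 : (0:ℝ) < N := by linarith
  have hq0 : 0 < q := by rw [hqdef]; positivity
  have hq2 : q ≤ 1/2 := by
    rw [hqdef]
    rw [div_le_div_iff₀ hN0 (by norm_num)]
    linarith
  have hp0 : 0 < 1 - q := by linarith
  have hp1 : (1:ℝ) - q < 1 := by linarith
  have hfl : (2:ℝ) ≤ (⌊c⌋:ℝ) := by exact_mod_cast hfloor
  have hc2 : (2:ℝ) ≤ c := le_trans hfl (Int.floor_le c)
  have hc0 : 0 < c := by linarith
  have hlam : lam₀ = q * c := by rw [hqdef, hcdef]; field_simp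
  have hlq : q < lam₀ := by nlinarith
  -- the truncation index
  set K : ℕ := (⌊c⌋ - 1).toNat with hKdef
  have hKz : ((K:ℕ):ℤ) = ⌊c⌋ - 1 := Int.toNat_of_nonneg (by omega)
  have hKr : ((K:ℕ):ℝ) = ((⌊c⌋:ℤ):ℝ) - 1 := by exact_mod_cast congrArg (fun z : ℤ => (z:ℝ)) hKz
  have hKc : ((K:ℕ):ℝ) ≤ c - 1 := by rw [hKr]; linarith [Int.floor_le c]
  have hcK : c < ((K:ℕ):ℝ) + 2 := by rw [hKr]; linarith [Int.lt_floor_add_one c]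
  -- measurability / integrability
  have hmeas : ∀ k : ℕ, MeasurableSet {ω | G ω = k} := fun k => hG (measurableSet_singleton k)
  have hintf : Integrable (fun ω => max (1 - ((G ω:ℝ)+1)/c) 0) μ := by
    apply Integrable.mono' (integrable_const (1:ℝ))
    · apply Measurable.aestronglyMeasurable
      apply Measurable.max _ measurable_const
      apply Measurable.sub measurable_const
      exact (measurable_from_top.comp hG : Measurable fun ω => ((G ω : ℕ):ℝ)).add_const 1
        |>.div_const c
    · filter_upwards with ω
      have h1 : 0 ≤ ((G ω:ℝ)+1)/c := by positivity
      rw [Real.norm_eq_abs, abs_of_nonneg (le_max_right _ _)]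
      exact max_le (by linarith) zero_le_one
  have hgint : ∀ k ∈ Finset.Icc 1 K,
      Integrable (Set.indicator {ω' | G ω' = k} (fun _ => 1 - ((k:ℝ)+1)/c)) μ :=
    fun k _ => (integrable_const _).indicator (hmeas k)
  have hle : ∀ ω, (∑ k ∈ Finset.Icc 1 K,
      Set.indicator {ω' | G ω' = k} (fun _ => 1 - ((k:ℝ)+1)/c) ω)
      ≤ max (1 - ((G ω:ℝ)+1)/c) 0 := by
    intro ω
    have hrew : ∀ k ∈ Finset.Icc 1 K,
        Set.indicator {ω' | G ω' = k} (fun _ => 1 - ((k:ℝ)+1)/c) ω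
        = if G ω = k then (1 - ((k:ℝ)+1)/c) else 0 := by
      intro k _
      simp [Set.indicator_apply, Set.mem_setOf_eq]
    rw [Finset.sum_congr rfl hrew,
      Finset.sum_ite_eq (Finset.Icc 1 K) (G ω) (fun k => 1 - ((k:ℝ)+1)/c)]
    split_ifs with h
    · exact le_max_left _ _
    · exact le_max_right _ _
  have h1 : ∫ ω, (∑ k ∈ Finset.Icc 1 K,
        Set.indicator {ω' | G ω' = k} (fun _ => 1 - ((k:ℝ)+1)/c) ω) ∂μ
      ≤ ∫ ω, max (1 - ((G ω:ℝ)+1)/c) 0 ∂μ :=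
    integral_mono (integrable_finset_sum _ hgint) hintf hle
  have h2 : ∫ ω, (∑ k ∈ Finset.Icc 1 K,
        Set.indicator {ω' | G ω' = k} (fun _ => 1 - ((k:ℝ)+1)/c) ω) ∂μ
      = ∑ k ∈ Finset.Icc 1 K, (1 - ((k:ℝ)+1)/c) * ((1-q)^(k-1) * q) := by
    rw [integral_finset_sum _ hgint]
    refine Finset.sum_congr rfl fun k hk => ?_
    rw [integral_indicator_const _ (hmeas k), measureReal_def, hdist k (Finset.mem_Icc.mp hk).1,
      ENNReal.toReal_ofReal (mul_nonneg (pow_nonneg hp0.le _) hq0.le), smul_eq_mul]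
    ring
  have h3 := sum_closed q c hq0.ne' hc0.ne' K
  -- arithmetic
  set B : ℝ := (1-q) ^ c with hBdef
  have hBpos : 0 < B := Real.rpow_pos_of_pos hp0 c
  have hBexp : B ≤ Real.exp (-lam₀) := by
    have h4 : (1:ℝ) - q ≤ Real.exp (-q) := by
      have := Real.add_one_le_exp (-q); linarith
    calc B ≤ (Real.exp (-q)) ^ c := Real.rpow_le_rpow hp0.le h4 hc0.le
    _ = Real.exp (-lam₀) := by
        rw [Real.rpow_def_of_pos (Real.exp_pos _), Real.log_exp, hlam]; ring_nf
  have hB1 : B * (1 + lam₀) ≤ 1 := by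
    have h5 := Real.add_one_le_exp lam₀
    have h6 : Real.exp (-lam₀) * Real.exp lam₀ = 1 := by
      rw [← Real.exp_add]; simp
    nlinarith [Real.exp_pos lam₀, Real.exp_pos (-lam₀), hBexp,
      mul_le_mul_of_nonneg_left h5 (Real.exp_pos (-lam₀)).le,
      mul_le_mul_of_nonneg_right hBexp (by linarith : (0:ℝ) ≤ 1 + lam₀)]
  have hB2 : B * (1 + lam₀ - q) ≤ 1 - q^2 + lam₀*q := by
    nlinarith [hB1, mul_pos hBpos hq0, mul_pos hq0 (sub_pos.mpr hlq)]
  have hK1 : (1-q)^K * (lam₀ - 1 - q - (K:ℝ)*q) ≤ -B := by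
    have e1 : ((1-q):ℝ)^K = (1-q) ^ ((K:ℕ):ℝ) := (Real.rpow_natCast _ K).symm
    have e2 : (1-q) ^ (c - 1) ≤ (1-q) ^ ((K:ℕ):ℝ) :=
      Real.rpow_le_rpow_of_exponent_ge hp0 hp1.le hKc
    have e3 : lam₀ - 1 - q - (K:ℝ)*q ≤ q - 1 := by
      have e3' : q * c < q * ((K:ℝ)+2) := mul_lt_mul_of_pos_left hcK hq0
      have e3'' : q * ((K:ℝ)+2) = q*(K:ℝ) + 2*q := by ring
      have e3''' : (K:ℝ)*q = q*(K:ℝ) := by ring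
      linarith [hlam]
    have e4 : (1-q)^(c-1) * (1-q) = B := by
      rw [hBdef, ← Real.rpow_add_one hp0.ne' (c-1), sub_add_cancel]
    calc (1-q)^K * (lam₀ - 1 - q - (K:ℝ)*q)
        ≤ (1-q)^K * (q-1) := mul_le_mul_of_nonneg_left e3 (pow_nonneg hp0.le K)
      _ ≤ (1-q)^(c-1) * (q-1) := mul_le_mul_of_nonpos_right (e1 ▸ e2) (by linarith)
      _ = -B := by rw [show (q-1) = -((1:ℝ)-q) by ring, mul_neg, e4]
  have hD : 0 < (lam₀ - q)*(1-q) := mul_pos (by linarith) hp0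
  have harith : 1 + (B - 1)/((lam₀ - q)*(1-q))
      ≤ 1 - (1+q)/(q*c) - (1-q)^K * (q*c - 1 - q - (K:ℝ)*q)/(q*c) := by
    rw [← hlam]
    set X : ℝ := (1-q)^K * (lam₀ - 1 - q - (K:ℝ)*q) with hXdef
    have key : (B - 1) * lam₀ ≤ (-(1+q) - X) * ((lam₀ - q)*(1-q)) := by
      have h7 : (B - (1+q)) * ((lam₀ - q)*(1-q)) ≤ (-(1+q) - X) * ((lam₀ - q)*(1-q)) :=
        mul_le_mul_of_nonneg_right (by linarith [hK1]) hD.le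
      have h8 : q*(B*(1+lam₀-q)) ≤ q*(1 - q^2 + lam₀*q) :=
        mul_le_mul_of_nonneg_left hB2 hq0.le
      nlinarith [h7, h8]
    have hdv : (B - 1)/((lam₀ - q)*(1-q)) ≤ (-(1+q) - X)/lam₀ :=
      (div_le_div_iff₀ hD h0).mpr key
    have hEq : 1 - (1+q)/lam₀ - X/lam₀ = 1 + (-(1+q) - X)/lam₀ := by ring
    rw [hEq]
    linarith
  calc 1 + (B - 1)/((lam₀ - q)*(1-q))
      ≤ ∑ k ∈ Finset.Icc 1 K, (1 - ((k:ℝ)+1)/c) * ((1-q)^(k-1) * q) := by rw [h3]; exact harith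
    _ ≤ ∫ ω, max (1 - ((G ω:ℝ)+1)/c) 0 ∂μ := h2 ▸ h1
end
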